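/- arXiv:1106.3248 — 3 statements merged into one kernel-verified Lean document; each statement's English description precedes it below -/
import Mathlib

section
/- Let Γ be a subgroup of GL(d,ℝ) acting irreducibly on a nonzero complex subspace W̃ of ℂ^d, such that every element of Γ has all eigenvalues of modulus at most C on W̃ (e.g., modulus 1). Then the matrix coefficients of the restrictions of elements of Γ to W̃ (in a fixed basis) are uniformly bounded; in particular the action of Γ on W̃ is relatively compact. -/
set_option synthInstance.maxHeartbeats 1000000
set_option maxHeartbeats 1000000

open Module LinearMap

section Burnside

variable {V : Type*} [AddCommGroup V] [Module ℂ V]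

/-- Submodules over a subalgebra of endomorphisms: simplicity from irreducibility. -/
lemma isSimpleModule_of_irreducible [Nontrivial V] (A : Subalgebra ℂ (Module.End ℂ V))
    (hirr : ∀ q : Submodule ℂ V, (∀ a ∈ A, ∀ x ∈ q, a x ∈ q) → q = ⊥ ∨ q = ⊤) :
    IsSimpleModule A V := by
  haveI : Nontrivial (Submodule A V) := by
    refine ⟨⊥, ⊤, fun h => ?_⟩
    obtain ⟨x, hx⟩ := exists_ne (0 : V)
    exact hx ((Submodule.mem_bot A).mp (h ▸ Submodule.mem_top))
  refine { eq_bot_or_eq_top := fun q => ?_ }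
  let q' : Submodule ℂ V :=
    { carrier := q
      add_mem' := fun h h' => q.add_mem h h'
      zero_mem' := q.zero_mem
      smul_mem' := fun c x hx => by
        have : (⟨algebraMap ℂ (Module.End ℂ V) c, A.algebraMap_mem c⟩ : A) • x ∈ q :=
          q.smul_mem _ hx
        have e : c • x = (⟨algebraMap ℂ (Module.End ℂ V) c, A.algebraMap_mem c⟩ : A) • x := by
          show c • x = (algebraMap ℂ (Module.End ℂ V) c) x
          rw [Module.algebraMap_end_apply]
        rw [e]; exact this }
  rcases hirr q' (fun a ha x hx => q.smul_mem (⟨a, ha⟩ : A) hx) with h | h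
  · left
    rw [Submodule.eq_bot_iff]
    intro x hx
    have : x ∈ q' := hx
    rw [h] at this
    exact this
  · right
    rw [Submodule.eq_top_iff']
    intro x
    have : x ∈ q' := h ▸ Submodule.mem_top
    exact this

/-- Schur's lemma: an `A`-linear endomorphism of a simple module is a scalar. -/
lemma schur_scalar [FiniteDimensional ℂ V] [Nontrivial V] (A : Subalgebra ℂ (Module.End ℂ V))
    (hs : IsSimpleModule A V) (g : V →ₗ[A] V) : ∃ c : ℂ, ∀ x, g x = c • x := by
  have hsmul : ∀ (c : ℂ) (x : V),
      c • x = (⟨algebraMap ℂ (Module.End ℂ V) c, A.algebraMap_mem c⟩ : A) • x := by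
    intro c x
    show c • x = (algebraMap ℂ (Module.End ℂ V) c) x
    rw [Module.algebraMap_end_apply]
  let g' : Module.End ℂ V :=
    { toFun := g
      map_add' := g.map_add
      map_smul' := by
        intro c x
        simp only [RingHom.id_apply]
        rw [hsmul c x, g.map_smul, ← hsmul] }
  obtain ⟨c, hc⟩ := Module.End.exists_eigenvalue g'
  obtain ⟨x, hx⟩ := hc.exists_hasEigenvector
  let sc : V →ₗ[A] V :=
    { toFun := fun y => c • y
      map_add' := fun y z => smul_add c y z
      map_smul' := fun a y => by
        simp only [RingHom.id_apply]
        show c • ((a : Module.End ℂ V) y) = (a : Module.End ℂ V) (c • y)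
        rw [map_smul] }
  have hker : g - sc = 0 := by
    rcases LinearMap.injective_or_eq_zero (g - sc) with h | h
    · exfalso
      have h0 : (g - sc) x = 0 := by
        have hgx : g' x = c • x := hx.apply_eq_smul
        simp only [LinearMap.sub_apply]
        rw [show g x = g' x from rfl, hgx]
        show c • x - c • x = 0
        simp
      refine hx.2 (h ?_)
      rw [h0, map_zero]
    · exact h
  refine ⟨c, fun y => ?_⟩
  have := congrArg (fun f => (f : V →ₗ[A] V) y) hker
  simpa [sub_eq_zero, sc] using this

/-- **Burnside's theorem**: a subalgebra of endomorphisms acting irreducibly on a nonzero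
finite-dimensional complex vector space is the whole endomorphism algebra. -/
theorem subalgebra_eq_top_of_irreducible [FiniteDimensional ℂ V] [Nontrivial V]
    (A : Subalgebra ℂ (Module.End ℂ V))
    (hirr : ∀ q : Submodule ℂ V, (∀ a ∈ A, ∀ x ∈ q, a x ∈ q) → q = ⊥ ∨ q = ⊤) :
    A = ⊤ := by
  haveI hs : IsSimpleModule A V := isSimpleModule_of_irreducible A hirr
  haveI : IsSemisimpleModule A V := inferInstance
  set κ := Fin (finrank ℂ V) with hκ
  let bV : Basis κ ℂ V := finBasis ℂ V
  haveI : IsSemisimpleModule A (κ → V) := by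
    refine isSemisimpleModule_of_isSemisimpleModule_submodule'
      (p := fun i => LinearMap.range (LinearMap.single A (fun _ : κ => V) i)) (fun i => ?_)
      (LinearMap.iSup_range_single A _)
    have hinj : Function.Injective (LinearMap.single A (fun _ : κ => V) i) := by
      rw [LinearMap.coe_single]
      exact Pi.single_injective i
    exact IsSemisimpleModule.congr (LinearEquiv.ofInjective _ hinj).symm
  let v : κ → V := ⇑bV
  set N : Submodule A (κ → V) := Submodule.span A {v} with hN
  obtain ⟨N', hN'⟩ := exists_isCompl N
  let π : (κ → V) →ₗ[A] (κ → V) := N.subtype ∘ₗ N.linearProjOfIsCompl N' hN'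
  have hπmem : ∀ w, π w ∈ N := fun w => (N.linearProjOfIsCompl N' hN' w).2
  have hπfix : ∀ w ∈ N, π w = w := by
    intro w hw
    have : N.linearProjOfIsCompl N' hN' w = ⟨w, hw⟩ :=
      Submodule.linearProjOfIsCompl_apply_left hN' ⟨w, hw⟩
    show N.subtype (N.linearProjOfIsCompl N' hN' w) = w
    rw [this]; rfl
  have hschur := fun (i j : κ) =>
    schur_scalar A hs ((LinearMap.proj i) ∘ₗ π ∘ₗ (LinearMap.single A (fun _ : κ => V) j))
  choose P hP using hschur
  have hdecomp : ∀ (w : κ → V) (i : κ), π w i = ∑ j, P i j • (w j) := by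
    intro w i
    have hw : w = ∑ j, LinearMap.single A (fun _ : κ => V) j (w j) := by
      funext k
      rw [Finset.sum_apply]
      simp [LinearMap.single_apply, Pi.single_apply]
    conv_lhs => rw [hw, map_sum]
    rw [Finset.sum_apply]
    refine Finset.sum_congr rfl fun j _ => ?_
    exact hP i j (w j)
  have hv : v ∈ N := Submodule.mem_span_singleton_self v
  have hPδ : ∀ i j, P i j = if j = i then 1 else 0 := by
    intro i j
    have h1 : ∑ k, P i k • bV k = bV i := by
      have := hdecomp v i
      rw [hπfix v hv] at this
      exact this.symm
    have h2 := congrArg (fun x => (bV.repr x) j) h1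
    simp only [map_sum, map_smul, Basis.repr_self] at h2
    rw [show (∑ k, P i k • Finsupp.single k (1:ℂ)) j = ∑ k, P i k * (Finsupp.single k (1:ℂ)) j by
      rw [Finsupp.finset_sum_apply]; exact Finset.sum_congr rfl fun k _ => rfl] at h2
    simp only [Finsupp.single_apply, mul_ite, mul_one, mul_zero] at h2
    rw [Finset.sum_ite_eq' Finset.univ j (P i)] at h2
    simp only [Finset.mem_univ, if_true] at h2
    rw [h2]; simp [eq_comm]
  have hπid : ∀ w, π w = w := by
    intro w
    funext i
    rw [hdecomp]
    simp [hPδ, ite_smul]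
  have hall : ∀ w : κ → V, w ∈ N := fun w => hπid w ▸ hπmem w
  rw [eq_top_iff]
  rintro T -
  obtain ⟨a, ha⟩ := Submodule.mem_span_singleton.mp (hall (fun i => T (bV i)))
  have haT : (a : Module.End ℂ V) = T := by
    apply bV.ext
    intro i
    exact congrFun ha i
  exact haT ▸ a.2

end Burnside
section Aux

open Matrix Polynomial

variable {n : Type*} [Fintype n] [DecidableEq n]

lemma root_charpoly_mem_spectrum (M : Matrix n n ℂ) {μ : ℂ} (h : μ ∈ M.charpoly.roots) :
    μ ∈ spectrum ℂ M := by
  have hroot : M.charpoly.IsRoot μ := (Polynomial.mem_roots'.mp h).2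
  have heval : M.charpoly.eval μ = (Matrix.scalar n μ - M).det := by
    rw [Matrix.charpoly, eval_det, matPolyEquiv_charmatrix]
    simp [Polynomial.eval_sub]
  rw [spectrum.mem_iff]
  intro hu
  rw [Matrix.isUnit_iff_isUnit_det] at hu
  have hdet : (algebraMap ℂ (Matrix n n ℂ) μ - M).det = 0 := by
    have h0 : (Matrix.scalar n μ - M).det = 0 := by rw [← heval]; exact hroot
    rw [show algebraMap ℂ (Matrix n n ℂ) μ = Matrix.scalar n μ by
      rw [Matrix.scalar_apply, Matrix.algebraMap_eq_diagonal]; rfl]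
    exact h0
  rw [hdet] at hu
  exact hu.ne_zero rfl

lemma abs_multiset_sum_le (s : Multiset ℂ) (C : ℝ) (h : ∀ z ∈ s, ‖z‖ ≤ C) :
    ‖s.sum‖ ≤ s.card * C := by
  induction s using Multiset.induction_on with
  | empty => simp
  | cons a s ih =>
    have ha := h a (Multiset.mem_cons_self a s)
    have hs := ih (fun z hz => h z (Multiset.mem_cons_of_mem hz))
    calc ‖(a ::ₘ s).sum‖ = ‖(a + s.sum)‖ := by rw [Multiset.sum_cons]
      _ ≤ ‖a‖ + ‖s.sum‖ := norm_add_le _ _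
      _ ≤ C + s.card * C := add_le_add ha hs
      _ = (a ::ₘ s).card * C := by rw [Multiset.card_cons]; push_cast; ring

lemma trace_bound {V : Type*} [AddCommGroup V] [Module ℂ V] [FiniteDimensional ℂ V]
    {ι : Type*} [Fintype ι] [DecidableEq ι] (b : Basis ι ℂ V) (f : Module.End ℂ V) {C : ℝ}
    (hC : 0 ≤ C) (h : ∀ z ∈ spectrum ℂ f, ‖z‖ ≤ C) :
    ‖(LinearMap.trace ℂ V f)‖ ≤ (Fintype.card ι : ℝ) * C := by
  rw [LinearMap.trace_eq_matrix_trace ℂ b, Matrix.trace_eq_sum_roots_charpoly]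
  have hspec : ∀ z ∈ ((LinearMap.toMatrix b b) f).charpoly.roots, ‖z‖ ≤ C := by
    intro z hz
    have hz' : z ∈ spectrum ℂ ((LinearMap.toMatrix b b) f) := root_charpoly_mem_spectrum _ hz
    rw [show LinearMap.toMatrix b b f = LinearMap.toMatrixAlgEquiv b f from rfl,
      AlgEquiv.spectrum_eq] at hz'
    exact h z hz'
  refine le_trans (abs_multiset_sum_le _ C hspec) ?_
  have hcard : ((((LinearMap.toMatrix b b) f).charpoly.roots.card : ℕ) : ℝ)
      ≤ (Fintype.card ι : ℝ) := by
    exact_mod_cast le_trans (Polynomial.card_roots' _)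
      (le_of_eq (Matrix.charpoly_natDegree_eq_dim _))
  exact mul_le_mul_of_nonneg_right hcard hC

end Aux

open Matrix

/-- Let `Γ ≤ GL(d,ℝ)` act (by complexification) on a nonzero complex
subspace `W` of `ℂ^d`, invariantly and irreducibly, and suppose every element of `Γ`
has all eigenvalues of modulus at most `C` on `W`. Then the matrix coefficients of the
restrictions of the elements of `Γ` to `W`, in a fixed basis, are uniformly bounded. -/
theorem stmt3 {d : ℕ} (Γ : Subgroup (GL (Fin d) ℝ)) (C : ℝ)
    (W : Submodule ℂ (Fin d → ℂ)) (hW0 : W ≠ ⊥)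
    (hinv : ∀ γ ∈ Γ, ∀ v ∈ W,
      (((γ : GL (Fin d) ℝ) : Matrix (Fin d) (Fin d) ℝ).map Complex.ofReal).mulVecLin v ∈ W)
    (hirr : ∀ q : Submodule ℂ W,
      (∀ γ (hγ : γ ∈ Γ), q.map
        ((((γ : GL (Fin d) ℝ) : Matrix (Fin d) (Fin d) ℝ).map
          Complex.ofReal).mulVecLin.restrict (hinv γ hγ)) ≤ q) →
      q = ⊥ ∨ q = ⊤)
    (heig : ∀ γ (hγ : γ ∈ Γ), ∀ z ∈ spectrum ℂ
      (((((γ : GL (Fin d) ℝ) : Matrix (Fin d) (Fin d) ℝ).map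
        Complex.ofReal).mulVecLin.restrict (hinv γ hγ) : Module.End ℂ W)),
      ‖z‖ ≤ C)
    {ι : Type*} [Fintype ι] [DecidableEq ι] (b : Module.Basis ι ℂ W) :
    ∃ M : ℝ, ∀ γ (hγ : γ ∈ Γ), ∀ i j : ι,
      ‖(LinearMap.toMatrix b b
        ((((γ : GL (Fin d) ℝ) : Matrix (Fin d) (Fin d) ℝ).map
          Complex.ofReal).mulVecLin.restrict (hinv γ hγ)) i j)‖ ≤ M := by
  classical
  haveI : Nontrivial ↥W := Submodule.nontrivial_iff_ne_bot.mpr hW0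
  set m : GL (Fin d) ℝ → Matrix (Fin d) (Fin d) ℂ :=
    fun γ => ((γ : Matrix (Fin d) (Fin d) ℝ).map Complex.ofReal) with hm
  let ρ : Γ → Module.End ℂ W := fun γ => (m γ.1).mulVecLin.restrict (hinv γ.1 γ.2)
  have hρ_apply : ∀ (γ : Γ) (x : ↥W), ((ρ γ x : (Fin d → ℂ))) = (m γ.1).mulVecLin x :=
    fun γ x => LinearMap.restrict_coe_apply _ _ x
  have hmmul : ∀ g h : GL (Fin d) ℝ, m (g * h) = m g * m h := by
    intro g h
    show ((g * h : GL (Fin d) ℝ) : Matrix (Fin d) (Fin d) ℝ).map Complex.ofReal = _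
    rw [Units.val_mul]
    exact Matrix.map_mul (f := Complex.ofRealHom)
  have hρmul : ∀ γ δ : Γ, ρ (γ * δ) = ρ γ * ρ δ := by
    intro γ δ
    apply LinearMap.ext; intro x
    apply Subtype.ext
    show ((ρ (γ * δ)) x : Fin d → ℂ) = ((ρ γ) ((ρ δ) x) : Fin d → ℂ)
    rw [hρ_apply, hρ_apply, hρ_apply]
    rw [show ((γ * δ : Γ) : GL (Fin d) ℝ) = (γ : GL (Fin d) ℝ) * (δ : GL (Fin d) ℝ) from rfl,
      hmmul, Matrix.mulVecLin_mul]
    rfl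
  have hρone : ρ 1 = 1 := by
    apply LinearMap.ext; intro x
    apply Subtype.ext
    rw [show ((ρ 1 x : (Fin d → ℂ))) = (m 1).mulVecLin x from hρ_apply 1 x]
    rw [show m 1 = 1 by
      show ((1 : GL (Fin d) ℝ) : Matrix (Fin d) (Fin d) ℝ).map Complex.ofReal = 1
      rw [Units.val_one]
      exact Matrix.map_one _ Complex.ofReal_zero Complex.ofReal_one]
    rw [Matrix.mulVecLin_one]
    rfl
  have heig' : ∀ γ : Γ, ∀ z ∈ spectrum ℂ (ρ γ), ‖z‖ ≤ C := fun γ => heig γ.1 γ.2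
  -- C is nonnegative
  have hC : 0 ≤ C := by
    obtain ⟨c, hc⟩ := Module.End.exists_eigenvalue (ρ 1)
    exact le_trans (norm_nonneg c)
      (heig' 1 c (Module.End.hasEigenvalue_iff_mem_spectrum.mp hc))
  -- Burnside: the algebra generated by the image of Γ is everything
  set A : Subalgebra ℂ (Module.End ℂ W) := Algebra.adjoin ℂ (Set.range ρ) with hA
  have hAtop : A = ⊤ := by
    apply subalgebra_eq_top_of_irreducible
    intro q hq
    apply hirr q
    intro γ hγ
    rw [Submodule.map_le_iff_le_comap]
    intro x hx
    exact hq _ (Algebra.subset_adjoin ⟨⟨γ, hγ⟩, rfl⟩) x hx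
  -- the span of the image of Γ is everything
  let Sm : Submonoid (Module.End ℂ W) :=
    { carrier := Set.range ρ
      mul_mem' := by rintro _ _ ⟨γ, rfl⟩ ⟨δ, rfl⟩; exact ⟨γ * δ, hρmul γ δ⟩
      one_mem' := ⟨1, hρone⟩ }
  have hspan : Submodule.span ℂ (Set.range ρ) = ⊤ := by
    have h1 := Algebra.adjoin_eq_span ℂ (Set.range ρ)
    rw [show Submonoid.closure (Set.range ρ) = Sm from Submonoid.closure_eq Sm, ← hA, hAtop,
      Algebra.top_toSubmodule] at h1
    exact h1.symm
  -- a finite linearly independent spanning subset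
  obtain ⟨t, hts, htspan, htli⟩ := exists_linearIndependent ℂ (Set.range ρ)
  rw [hspan] at htspan
  haveI : Finite ↥t := htli.finite
  haveI : Fintype ↥t := Fintype.ofFinite _
  -- the trace pairing against elements of t
  let φ : Module.End ℂ W →ₗ[ℂ] (↥t → ℂ) :=
    LinearMap.pi (fun e : ↥t =>
      (LinearMap.trace ℂ ↥W) ∘ₗ (LinearMap.mulRight ℂ (e : Module.End ℂ W)))
  have hφ_apply : ∀ (T : Module.End ℂ W) (e : ↥t),
      φ T e = LinearMap.trace ℂ ↥W (T * (e : Module.End ℂ W)) := fun T e => rfl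
  have hφinj : LinearMap.ker φ = ⊥ := by
    rw [LinearMap.ker_eq_bot']
    intro T hT
    have htr : ∀ S : Module.End ℂ W, LinearMap.trace ℂ ↥W (T * S) = 0 := by
      intro S
      have hS : S ∈ Submodule.span ℂ t := htspan ▸ Submodule.mem_top
      induction hS using Submodule.span_induction with
      | mem x hx => exact congrFun hT ⟨x, hx⟩
      | zero => simp
      | add x y _ _ hx hy => rw [mul_add, map_add, hx, hy, add_zero]
      | smul c x _ hx => rw [mul_smul_comm, _root_.map_smul, hx, smul_zero]
    have hM : ∀ N : Matrix ι ι ℂ, ((LinearMap.toMatrix b b) T * N).trace = 0 := by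
      intro N
      have h2 := htr ((Matrix.toLin b b) N)
      rw [LinearMap.trace_eq_matrix_trace ℂ b,
        show (T * (Matrix.toLin b b) N : Module.End ℂ W) = T ∘ₗ (Matrix.toLin b b) N from rfl,
        LinearMap.toMatrix_comp b b b, LinearMap.toMatrix_toLin] at h2
      exact h2
    have hMz : (LinearMap.toMatrix b b) T = 0 := by
      ext i j
      have h3 := hM (Matrix.single j i 1)
      have h5 : Matrix.trace ((LinearMap.toMatrix b b) T * Matrix.single j i 1)
          = (LinearMap.toMatrix b b) T i j := by
        simp [Matrix.trace, Matrix.diag, Matrix.mul_apply, Matrix.single, ite_and]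
      rw [h5] at h3
      simpa using h3
    have h4 := congrArg (Matrix.toLin b b) hMz
    rwa [Matrix.toLin_toMatrix, map_zero] at h4
  obtain ⟨ψ, hψ⟩ := LinearMap.exists_leftInverse_of_injective (K := ℂ) (V := Module.End ℂ ↥W) (V' := ↥t → ℂ) φ hφinj
  let k : ↥t → Module.End ℂ W := fun e => ψ (fun j : ↥t => if e = j then (1:ℂ) else 0)
  have hrep : ∀ T : Module.End ℂ W, T = ∑ e : ↥t, φ T e • k e := by
    intro T
    calc T = ψ (φ T) := (LinearMap.congr_fun hψ T).symm
      _ = ψ (∑ e : ↥t, φ T e • fun j : ↥t => if e = j then (1:ℂ) else 0) := by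
          rw [← pi_eq_sum_univ (φ T)]
      _ = ∑ e : ↥t, φ T e • k e := by
          rw [map_sum]
          exact Finset.sum_congr rfl fun e _ => by rw [_root_.map_smul]
  -- the bound
  set B : ℝ := (Fintype.card ι : ℝ) * C with hB
  have hB0 : 0 ≤ B := mul_nonneg (Nat.cast_nonneg _) hC
  set K : ℝ := ∑ i : ι, ∑ j : ι, ∑ e : ↥t,
    ‖((LinearMap.toMatrix b b) (k e) i j)‖ with hK
  refine ⟨B * K, ?_⟩
  intro γ hγ i j
  show ‖((LinearMap.toMatrix b b) (ρ ⟨γ, hγ⟩) i j)‖ ≤ B * K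
  -- bound on the trace coefficients
  have htrb : ∀ e : ↥t, ‖(φ (ρ ⟨γ, hγ⟩) e)‖ ≤ B := by
    intro e
    obtain ⟨δ, hδ⟩ := hts e.2
    rw [hφ_apply, ← hδ, ← hρmul]
    exact trace_bound b _ hC (heig' _)
  have h1 : (LinearMap.toMatrix b b) (ρ ⟨γ, hγ⟩) i j
      = ∑ e : ↥t, φ (ρ ⟨γ, hγ⟩) e * ((LinearMap.toMatrix b b) (k e) i j) := by
    conv_lhs => rw [hrep (ρ ⟨γ, hγ⟩)]
    rw [map_sum, Matrix.sum_apply]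
    refine Finset.sum_congr rfl fun e _ => ?_
    rw [_root_.map_smul]
    rfl
  rw [h1]
  refine le_trans (norm_sum_le _ _) ?_
  have h2 : ∀ e : ↥t, ‖(φ (ρ ⟨γ, hγ⟩) e * ((LinearMap.toMatrix b b) (k e) i j))‖
      ≤ B * ‖((LinearMap.toMatrix b b) (k e) i j)‖ := by
    intro e
    rw [norm_mul]
    exact mul_le_mul_of_nonneg_right (htrb e) (norm_nonneg _)
  refine le_trans (Finset.sum_le_sum fun e _ => h2 e) ?_
  rw [← Finset.mul_sum]
  refine mul_le_mul_of_nonneg_left ?_ hB0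
  have h3 : ∑ e : ↥t, ‖((LinearMap.toMatrix b b) (k e) i j)‖
      ≤ ∑ j' : ι, ∑ e : ↥t, ‖((LinearMap.toMatrix b b) (k e) i j')‖ := by
    refine Finset.single_le_sum (f := fun j' => ∑ e : ↥t,
      ‖((LinearMap.toMatrix b b) (k e) i j')‖) (fun j' _ => ?_) (Finset.mem_univ j)
    exact Finset.sum_nonneg fun e _ => norm_nonneg _
  refine le_trans h3 ?_
  rw [hK]
  refine Finset.single_le_sum (f := fun i' => ∑ j' : ι, ∑ e : ↥t,
    ‖((LinearMap.toMatrix b b) (k e) i' j')‖) (fun i' _ => ?_) (Finset.mem_univ i)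
  exact Finset.sum_nonneg fun j' _ => Finset.sum_nonneg fun e _ => norm_nonneg _
end

section
/- Let τ be an ergodic invertible measure-preserving transformation of a probability space (Y,λ) and φ : Y → ℝ^d Borel with ergodic sums S_nφ. Then the recurrence of (S_nφ) (a.e. point returns infinitely often to every neighborhood of 0) is equivalent to the conservativity of the skew product τ_φ(y,v) = (τ y, v + φ(y)) on (Y × ℝ^d, λ ⊗ Lebesgue). -/
set_option linter.unusedSectionVars false
set_option linter.unusedTactic false

open MeasureTheory Filter Set
open scoped ENNReal

namespace Stmt15Aux

open scoped Classical

variable {Y : Type*} [MeasurableSpace Y] {d : ℕ}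

/-- ergodic sums -/
def SS (τ : Y → Y) (φ : Y → (Fin d → ℝ)) (n : ℕ) (y : Y) : Fin d → ℝ :=
  ∑ k ∈ Finset.range n, φ (τ^[k] y)

/-- the skew product -/
def TT (τ : Y → Y) (φ : Y → (Fin d → ℝ)) (q : Y × (Fin d → ℝ)) : Y × (Fin d → ℝ) :=
  (τ q.1, q.2 + φ q.1)

lemma skew_iter (τ : Y → Y) (φ : Y → (Fin d → ℝ)) :
    ∀ (n : ℕ) (p : Y × (Fin d → ℝ)),
      (TT τ φ)^[n] p = (τ^[n] p.1, p.2 + SS τ φ n p.1) := by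
  intro n
  induction n with
  | zero => intro p; simp [SS]
  | succ n ih =>
    intro p
    rw [Function.iterate_succ_apply', ih]
    unfold TT SS
    simp only [Finset.sum_range_succ, Function.iterate_succ_apply']
    exact Prod.ext rfl (by rw [add_assoc])

lemma SS_cocycle (τ : Y → Y) (φ : Y → (Fin d → ℝ)) (n k : ℕ) (y : Y) :
    SS τ φ (n + k) y = SS τ φ n y + SS τ φ k (τ^[n] y) := by
  unfold SS
  rw [Finset.sum_range_add]
  congr 1
  refine Finset.sum_congr rfl fun x _ => ?_
  rw [add_comm n x, Function.iterate_add_apply]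

lemma SS_measurable {τ : Y → Y} (hτm : Measurable τ) {φ : Y → (Fin d → ℝ)}
    (hφ : Measurable φ) (n : ℕ) : Measurable (SS τ φ n) := by
  unfold SS
  exact Finset.measurable_sum _ fun k _ => hφ.comp (hτm.iterate k)

lemma TT_measurable {τ : Y → Y} (hτm : Measurable τ) {φ : Y → (Fin d → ℝ)}
    (hφ : Measurable φ) : Measurable (TT τ φ) :=
  (hτm.comp measurable_fst).prodMk (measurable_snd.add (hφ.comp measurable_fst))

lemma TT_measurePreserving {τ : Y → Y} (lam : Measure Y) [SFinite lam]
    (hτ : MeasurePreserving τ lam lam) {φ : Y → (Fin d → ℝ)} (hφ : Measurable φ) :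
    MeasurePreserving (TT τ φ) (lam.prod volume) (lam.prod volume) := by
  have hgm : Measurable (Function.uncurry fun (y : Y) (v : Fin d → ℝ) => v + φ y) :=
    measurable_snd.add (hφ.comp measurable_fst)
  exact hτ.skew_product hgm (ae_of_all _ fun y =>
    (measurePreserving_add_right volume (φ y)).map_eq)

/-- interval counting lemma -/
lemma grid_interval_bound (a δ : ℝ) (hδ : 0 < δ) (hδ2 : δ ≤ 1/2) :
    volume ({x : ℝ | ∃ m : ℤ, |a - x - m| < δ} ∩ Ico (0:ℝ) 1)
      ≤ ENNReal.ofReal (4 * δ) := by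
  set M₀ : ℤ := ⌊a - δ⌋ with hM₀
  have hsub : {x : ℝ | ∃ m : ℤ, |a - x - m| < δ} ∩ Ico (0:ℝ) 1 ⊆
      Ioo (a - M₀ - δ) (a - M₀ + δ) ∪ Ioo (a - (M₀ + 1) - δ) (a - (M₀ + 1) + δ) := by
    rintro x ⟨⟨m, hm⟩, hx0, hx1⟩
    have h1 : (m : ℝ) < a - x + δ := by
      have := abs_lt.1 hm; linarith [this.1]
    have h2 : a - x - δ < (m : ℝ) := by
      have := abs_lt.1 hm; linarith [this.2]
    have hfl : (M₀ : ℝ) ≤ a - δ := Int.floor_le _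
    have hfl2 : a - δ < (M₀ : ℝ) + 1 := Int.lt_floor_add_one _
    have hmle : m ≤ M₀ + 1 := by
      have : (m : ℝ) < (M₀ : ℝ) + 2 := by linarith
      have : m < M₀ + 2 := by exact_mod_cast this
      omega
    have hmge : M₀ ≤ m := by
      have : (M₀ : ℝ) - 1 < (m : ℝ) := by linarith
      have : M₀ - 1 < m := by exact_mod_cast this
      omega
    have habs := abs_lt.1 hm
    rcases (by omega : m = M₀ ∨ m = M₀ + 1) with h | h
    · left; subst h; push_cast at habs
      exact ⟨by linarith [habs.1, habs.2], by linarith [habs.1, habs.2]⟩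
    · right; subst h; push_cast at habs
      exact ⟨by linarith [habs.1, habs.2], by linarith [habs.1, habs.2]⟩
  calc volume ({x : ℝ | ∃ m : ℤ, |a - x - m| < δ} ∩ Ico (0:ℝ) 1)
      ≤ volume (Ioo (a - M₀ - δ) (a - M₀ + δ) ∪ Ioo (a - (M₀+1) - δ) (a - (M₀+1) + δ)) :=
        measure_mono hsub
    _ ≤ volume (Ioo (a - M₀ - δ) (a - M₀ + δ)) + volume (Ioo (a - (M₀+1) - δ) (a - (M₀+1) + δ)) :=
        measure_union_le _ _
    _ ≤ ENNReal.ofReal (4 * δ) := by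
        rw [Real.volume_Ioo, Real.volume_Ioo, ← ENNReal.ofReal_add (by linarith) (by linarith)]
        apply ENNReal.ofReal_le_ofReal
        ring_nf
        linarith


/-- cube index of the ergodic sum relative to the grid translated by `t` -/
noncomputable def idx (τ : Y → Y) (φ : Y → (Fin d → ℝ)) (t : Fin d → ℝ) (n : ℕ) (y : Y) : Fin d → ℤ :=
  fun i => ⌊SS τ φ n y i - t i⌋

/-- `n` is the last visit (before time `N`) of the walk to its current cube -/
def lastP (τ : Y → Y) (φ : Y → (Fin d → ℝ)) (t : Fin d → ℝ) (N n : ℕ) (y : Y) : Prop :=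
  ∀ m, m < N → n < m → idx τ φ t m y ≠ idx τ φ t n y

def Box (c t : Fin d → ℝ) (j : Fin d → ℤ) : Set (Fin d → ℝ) :=
  Set.univ.pi fun i => Ioo (c i - t i - j i - 2) (c i - t i - j i + 1)

lemma Box_volume (c t : Fin d → ℝ) (j : Fin d → ℤ) :
    volume (Box c t j) = (ENNReal.ofReal 3) ^ d := by
  unfold Box
  rw [volume_pi_pi]
  have h : ∀ i : Fin d, volume (Ioo (c i - t i - j i - 2) (c i - t i - j i + 1))
      = ENNReal.ofReal 3 := by
    intro i; rw [Real.volume_Ioo]; norm_num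
  rw [Finset.prod_congr rfl fun i _ => h i, Finset.prod_const, Finset.card_univ,
    Fintype.card_fin]

lemma packing {τ : Y → Y} {φ : Y → (Fin d → ℝ)}
    (W : Set (Y × (Fin d → ℝ))) (hWm : MeasurableSet W)
    (c : Fin d → ℝ) (hWball : ∀ p ∈ W, p.2 ∈ Metric.ball c 1)
    (hdis : ∀ (p : Y × (Fin d → ℝ)) (n m : ℕ), n < m →
      (TT τ φ)^[n] p ∈ W → (TT τ φ)^[m] p ∈ W → False)
    (t : Fin d → ℝ) (N : ℕ) (y : Y) :
    ∑ n ∈ Finset.range N, volume (Prod.mk (τ^[n] y) ⁻¹' W)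
      ≤ (((Finset.range N).filter (fun n => lastP τ φ t N n y)).card : ℝ≥0∞)
          * (ENNReal.ofReal 3) ^ d := by
  classical
  set D : ℕ → Set (Fin d → ℝ) := fun n => {v | (TT τ φ)^[n] (y, v) ∈ W} with hD
  have hDeq : ∀ n, D n = (fun v => v + SS τ φ n y) ⁻¹' (Prod.mk (τ^[n] y) ⁻¹' W) := by
    intro n; ext v; simp [hD, skew_iter]
  have hDm : ∀ n, MeasurableSet (D n) := by
    intro n
    rw [hDeq]
    exact (measurable_prodMk_left.comp (measurable_id.add_const _)) hWm
  have hDvol : ∀ n, volume (D n) = volume (Prod.mk (τ^[n] y) ⁻¹' W) := by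
    intro n
    rw [hDeq]
    exact (measurePreserving_add_right volume (SS τ φ n y)).measure_preimage
      (measurable_prodMk_left hWm).nullMeasurableSet
  have hDsub : ∀ n, D n ⊆ Box c t (idx τ φ t n y) := by
    intro n v hv
    have hball : v + SS τ φ n y ∈ Metric.ball c 1 := by
      have : (TT τ φ)^[n] (y, v) ∈ W := hv
      have h2 := hWball _ this
      rwa [skew_iter] at h2
    intro i _
    have hdist : dist (v i + SS τ φ n y i) (c i) < 1 := by
      have := (dist_pi_lt_iff one_pos).1 (Metric.mem_ball.1 hball) i
      simpa using this
    rw [Real.dist_eq] at hdist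
    have habs := abs_lt.1 hdist
    have hfl1 : ((idx τ φ t n y i : ℝ)) ≤ SS τ φ n y i - t i := Int.floor_le _
    have hfl2 : SS τ φ n y i - t i < (idx τ φ t n y i : ℝ) + 1 := Int.lt_floor_add_one _
    constructor
    · linarith [habs.1, habs.2]
    · linarith [habs.1, habs.2]
  have hdisD : (↑(Finset.range N) : Set ℕ).PairwiseDisjoint D := by
    intro n _ m _ hnm
    rcases hnm.lt_or_gt with h | h
    · exact Set.disjoint_left.2 fun v hvn hvm => hdis (y, v) n m h hvn hvm
    · exact Set.disjoint_left.2 fun v hvn hvm => hdis (y, v) m n h hvm hvn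
  have hcover : (⋃ n ∈ Finset.range N, D n) ⊆
      ⋃ n ∈ (Finset.range N).filter (fun n => lastP τ φ t N n y),
        Box c t (idx τ φ t n y) := by
    intro v hv
    simp only [Set.mem_iUnion, exists_prop] at hv ⊢
    obtain ⟨m, hmN, hvD⟩ := hv
    set M := (Finset.range N).filter
      (fun k => m ≤ k ∧ idx τ φ t k y = idx τ φ t m y) with hM
    have hmM : m ∈ M := Finset.mem_filter.2 ⟨hmN, le_refl m, rfl⟩
    have hMne : M.Nonempty := ⟨m, hmM⟩
    set n := M.max' hMne with hn
    have hnM : n ∈ M := M.max'_mem hMne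
    simp only [hM, Finset.mem_filter] at hnM
    obtain ⟨hnN, hmn, hidx⟩ := hnM
    refine ⟨n, ?_, ?_⟩
    · rw [Finset.mem_filter]
      refine ⟨hnN, fun m' hm'N hnm' heq => ?_⟩
      have hm'M : m' ∈ M := by
        simp only [hM, Finset.mem_filter]
        exact ⟨Finset.mem_range.2 hm'N, le_trans hmn (le_of_lt hnm'), heq.trans hidx⟩
      exact absurd (M.le_max' m' hm'M) (not_le.2 hnm')
    · rw [hidx]
      exact hDsub m hvD
  calc ∑ n ∈ Finset.range N, volume (Prod.mk (τ^[n] y) ⁻¹' W)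
      = ∑ n ∈ Finset.range N, volume (D n) := by
        exact Finset.sum_congr rfl fun n _ => (hDvol n).symm
    _ = volume (⋃ n ∈ Finset.range N, D n) :=
        (measure_biUnion_finset hdisD fun n _ => hDm n).symm
    _ ≤ volume (⋃ n ∈ (Finset.range N).filter (fun n => lastP τ φ t N n y),
          Box c t (idx τ φ t n y)) := measure_mono hcover
    _ ≤ ∑ n ∈ (Finset.range N).filter (fun n => lastP τ φ t N n y),
          volume (Box c t (idx τ φ t n y)) := measure_biUnion_finset_le _ _
    _ = ∑ _n ∈ (Finset.range N).filter (fun n => lastP τ φ t N n y),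
          (ENNReal.ofReal 3) ^ d :=
        Finset.sum_congr rfl fun n _ => Box_volume c t _
    _ = (((Finset.range N).filter (fun n => lastP τ φ t N n y)).card : ℝ≥0∞)
          * (ENNReal.ofReal 3) ^ d := by
        rw [Finset.sum_const, nsmul_eq_mul]

lemma dichotomy {τ : Y → Y} {φ : Y → (Fin d → ℝ)} {t : Fin d → ℝ} {δ : ℝ}
    (N n : ℕ) (y : Y) (hP : lastP τ φ t N n y)
    (hBd : ¬ ∃ i : Fin d, ∃ m : ℤ, |SS τ φ n y i - t i - m| < δ) :
    ∀ k, 1 ≤ k → k < N - n → δ ≤ ‖SS τ φ k (τ^[n] y)‖ := by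
  intro k hk1 hkN
  by_contra hlt
  push_neg at hlt
  push_neg at hBd
  apply hP (n + k) (by omega) (by omega)
  funext i
  have hsmall : |SS τ φ k (τ^[n] y) i| < δ := by
    calc |SS τ φ k (τ^[n] y) i| = ‖SS τ φ k (τ^[n] y) i‖ := (Real.norm_eq_abs _).symm
      _ ≤ ‖SS τ φ k (τ^[n] y)‖ := norm_le_pi_norm _ i
      _ < δ := hlt
  have hδpos : 0 < δ := lt_of_le_of_lt (abs_nonneg _) hsmall
  set a := SS τ φ n y i - t i with ha
  set j := ⌊a⌋ with hj
  have h1 := hBd i j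
  have h2 := hBd i (j + 1)
  have hj1 : (j : ℝ) ≤ a := Int.floor_le a
  have hj2 : a < (j : ℝ) + 1 := Int.lt_floor_add_one a
  have ha1 : (j : ℝ) + δ ≤ a := by
    rw [abs_of_nonneg (by linarith)] at h1; linarith
  have ha2 : a ≤ (j : ℝ) + 1 - δ := by
    push_cast at h2
    rw [abs_of_nonpos (by linarith)] at h2; linarith
  show (⌊SS τ φ (n + k) y i - t i⌋ : ℤ) = ⌊SS τ φ n y i - t i⌋
  have hcoc : SS τ φ (n + k) y i = SS τ φ n y i + SS τ φ k (τ^[n] y) i := by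
    rw [SS_cocycle]; simp
  rw [hcoc]
  have habs := abs_lt.1 hsmall
  rw [← ha, ← hj]
  apply Int.floor_eq_iff.2
  constructor
  · push_cast; linarith
  · push_cast; linarith


@[simp] lemma idx_apply (τ : Y → Y) (φ : Y → (Fin d → ℝ)) (t : Fin d → ℝ) (n : ℕ)
    (y : Y) (i : Fin d) : idx τ φ t n y i = ⌊SS τ φ n y i - t i⌋ := rfl

lemma measurable_idx_coord {τ : Y → Y} (hτm : Measurable τ) {φ : Y → (Fin d → ℝ)}
    (hφ : Measurable φ) (m : ℕ) (i : Fin d) :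
    Measurable fun q : (Fin d → ℝ) × Y => idx τ φ q.1 m q.2 i :=
  Measurable.floor
    (((measurable_pi_apply i).comp ((SS_measurable hτm hφ m).comp measurable_snd)).sub
      ((measurable_pi_apply i).comp measurable_fst))

lemma measurableSet_idx_eq {τ : Y → Y} (hτm : Measurable τ) {φ : Y → (Fin d → ℝ)}
    (hφ : Measurable φ) (m n : ℕ) :
    MeasurableSet {q : (Fin d → ℝ) × Y | idx τ φ q.1 m q.2 = idx τ φ q.1 n q.2} := by
  have hrw : {q : (Fin d → ℝ) × Y | idx τ φ q.1 m q.2 = idx τ φ q.1 n q.2}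
      = ⋂ i : Fin d, ⋃ z : ℤ,
        ({q : (Fin d → ℝ) × Y | idx τ φ q.1 m q.2 i = z} ∩
          {q : (Fin d → ℝ) × Y | idx τ φ q.1 n q.2 i = z}) := by
    ext q
    simp only [mem_setOf_eq, Set.mem_iInter, Set.mem_iUnion, Set.mem_inter_iff]
    constructor
    · intro h i
      exact ⟨idx τ φ q.1 n q.2 i, congrFun h i, rfl⟩
    · intro h
      funext i
      obtain ⟨z, h1, h2⟩ := h i
      rw [h1, h2]
  rw [hrw]
  exact MeasurableSet.iInter fun i => MeasurableSet.iUnion fun z =>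
    ((measurable_idx_coord hτm hφ m i) (measurableSet_singleton z)).inter
      ((measurable_idx_coord hτm hφ n i) (measurableSet_singleton z))

lemma measurableSet_lastP_prod {τ : Y → Y} (hτm : Measurable τ) {φ : Y → (Fin d → ℝ)}
    (hφ : Measurable φ) (N n : ℕ) :
    MeasurableSet {q : (Fin d → ℝ) × Y | lastP τ φ q.1 N n q.2} := by
  have hrw : {q : (Fin d → ℝ) × Y | lastP τ φ q.1 N n q.2}
      = ⋂ m, ⋂ (_ : m < N), ⋂ (_ : n < m),
        {q : (Fin d → ℝ) × Y | idx τ φ q.1 m q.2 = idx τ φ q.1 n q.2}ᶜ := by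
    ext q
    simp [lastP]
  rw [hrw]
  exact MeasurableSet.iInter fun m => MeasurableSet.iInter fun _ =>
    MeasurableSet.iInter fun _ => (measurableSet_idx_eq hτm hφ m n).compl

lemma measurableSet_Bd_prod {τ : Y → Y} (hτm : Measurable τ) {φ : Y → (Fin d → ℝ)}
    (hφ : Measurable φ) (n : ℕ) (δ : ℝ) :
    MeasurableSet {q : (Fin d → ℝ) × Y |
      ∃ i : Fin d, ∃ m : ℤ, |SS τ φ n q.2 i - q.1 i - m| < δ} := by
  have hrw : {q : (Fin d → ℝ) × Y | ∃ i : Fin d, ∃ m : ℤ, |SS τ φ n q.2 i - q.1 i - m| < δ}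
      = ⋃ i : Fin d, ⋃ m : ℤ, {q : (Fin d → ℝ) × Y | |SS τ φ n q.2 i - q.1 i - m| < δ} := by
    ext q; simp
  rw [hrw]
  refine MeasurableSet.iUnion fun i => MeasurableSet.iUnion fun m => ?_
  have hm : Measurable fun q : (Fin d → ℝ) × Y => |SS τ φ n q.2 i - q.1 i - m| :=
    ((((measurable_pi_apply i).comp ((SS_measurable hτm hφ n).comp measurable_snd)).sub
      ((measurable_pi_apply i).comp measurable_fst)).sub measurable_const).abs
  exact measurableSet_lt hm measurable_const

lemma nu_bd_le {δ : ℝ} (hδ : 0 < δ) (hδ2 : δ ≤ 1/2) (a : Fin d → ℝ) :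
    (Measure.pi fun _ : Fin d => (volume : Measure ℝ).restrict (Ico (0:ℝ) 1))
      {t : Fin d → ℝ | ∃ i : Fin d, ∃ m : ℤ, |a i - t i - m| < δ}
      ≤ (d : ℝ≥0∞) * ENNReal.ofReal (4 * δ) := by
  classical
  set ν := Measure.pi fun _ : Fin d => (volume : Measure ℝ).restrict (Ico (0:ℝ) 1) with hν
  set E : Fin d → Set ℝ := fun i => {x : ℝ | ∃ m : ℤ, |a i - x - m| < δ} with hE
  have hEm : ∀ i, MeasurableSet (E i) := by
    intro i
    have : E i = ⋃ m : ℤ, Ioo (a i - m - δ) (a i - m + δ) := by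
      ext x
      simp only [hE, mem_setOf_eq, Set.mem_iUnion, Set.mem_Ioo]
      constructor
      · rintro ⟨m, hm⟩
        have := abs_lt.1 hm
        exact ⟨m, by linarith [this.1, this.2], by linarith [this.1, this.2]⟩
      · rintro ⟨m, h1, h2⟩
        exact ⟨m, abs_lt.2 ⟨by linarith, by linarith⟩⟩
    rw [this]
    exact MeasurableSet.iUnion fun m => measurableSet_Ioo
  have hrw : {t : Fin d → ℝ | ∃ i : Fin d, ∃ m : ℤ, |a i - t i - m| < δ}
      = ⋃ i : Fin d, Function.eval i ⁻¹' E i := by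
    ext t
    simp only [mem_setOf_eq, Set.mem_iUnion, Set.mem_preimage, Function.eval, hE]
  rw [hrw]
  calc ν (⋃ i : Fin d, Function.eval i ⁻¹' E i)
      ≤ ∑ i : Fin d, ν (Function.eval i ⁻¹' E i) := measure_iUnion_fintype_le _ _
    _ ≤ ∑ _i : Fin d, ENNReal.ofReal (4 * δ) := by
        refine Finset.sum_le_sum fun i _ => ?_
        have hpre : Function.eval i ⁻¹' E i
            = Set.univ.pi (Function.update (fun _ : Fin d => (Set.univ : Set ℝ)) i (E i)) :=
          Set.eval_preimage
        rw [hpre, hν, Measure.pi_pi]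
        have hupd : ∀ j : Fin d,
            ((volume : Measure ℝ).restrict (Ico (0:ℝ) 1))
              (Function.update (fun _ : Fin d => (Set.univ : Set ℝ)) i (E i) j)
            = Function.update (fun _ : Fin d => (1 : ℝ≥0∞)) i
                (((volume : Measure ℝ).restrict (Ico (0:ℝ) 1)) (E i)) j := by
          intro j
          by_cases h : j = i
          · subst h; simp
          · simp [Function.update_of_ne h, Measure.restrict_apply_univ, Real.volume_Ico]
        rw [Finset.prod_congr rfl fun j _ => hupd j,
          Finset.prod_update_of_mem (Finset.mem_univ i)]
        simp only [Finset.prod_const_one, mul_one]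
        rw [Measure.restrict_apply (hEm i)]
        exact grid_interval_bound (a i) δ hδ hδ2
    _ = (d : ℝ≥0∞) * ENNReal.ofReal (4 * δ) := by
        rw [Finset.sum_const, Finset.card_univ, Fintype.card_fin, nsmul_eq_mul]

end Stmt15Aux

open Stmt15Aux

/-- Let `τ` be an ergodic invertible measure-preserving transformation
of a probability space `(Y,λ)` and `φ : Y → ℝ^d` Borel, with ergodic sums
`S_nφ(y) = ∑_{k<n} φ(τ^k y)`. Then recurrence of `(S_nφ)` (a.e. point returns infinitely
often to every neighborhood of `0`) is equivalent to conservativity of the skew product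
`τ_φ(y,v) = (τ y, v + φ(y))` on `(Y × ℝ^d, λ ⊗ Leb)`. -/
theorem stmt15 {Y : Type*} [MeasurableSpace Y] (lam : Measure Y)
    [IsProbabilityMeasure lam] {d : ℕ}
    (τ : Y → Y) (hτb : Function.Bijective τ) (hτ : Ergodic τ lam)
    (φ : Y → (Fin d → ℝ)) (hφ : Measurable φ) :
    (∀ᵐ y ∂lam, ∀ U ∈ nhds (0 : Fin d → ℝ),
      {n : ℕ | (∑ k ∈ Finset.range n, φ (τ^[k] y)) ∈ U}.Infinite) ↔
    (∀ A : Set (Y × (Fin d → ℝ)), MeasurableSet A →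
      0 < (lam.prod volume) A →
      (lam.prod volume) {p ∈ A | ∀ n : ℕ, 1 ≤ n →
        (fun q : Y × (Fin d → ℝ) => (τ q.1, q.2 + φ q.1))^[n] p ∉ A} = 0) := by
  classical
  have hτm : Measurable τ := hτ.toMeasurePreserving.measurable
  have hTm : Measurable (TT τ φ) := TT_measurable hτm hφ
  have hTp : MeasurePreserving (TT τ φ) (lam.prod volume) (lam.prod volume) :=
    TT_measurePreserving lam hτ.toMeasurePreserving hφ
  show (∀ᵐ y ∂lam, ∀ U ∈ nhds (0 : Fin d → ℝ), {n : ℕ | SS τ φ n y ∈ U}.Infinite) ↔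
    (∀ A : Set (Y × (Fin d → ℝ)), MeasurableSet A → 0 < (lam.prod volume) A →
      (lam.prod volume) {p ∈ A | ∀ n : ℕ, 1 ≤ n → (TT τ φ)^[n] p ∉ A} = 0)
  constructor
  · -- hard direction: recurrence implies conservativity
    intro hrec A hA _
    by_contra h0
    set Bad := {p ∈ A | ∀ n : ℕ, 1 ≤ n → (TT τ φ)^[n] p ∉ A} with hBad
    have hBadm : MeasurableSet Bad := by
      have : Bad = A ∩ ⋂ n, ⋂ (_ : 1 ≤ n), ((TT τ φ)^[n]) ⁻¹' Aᶜ := by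
        ext q
        simp only [hBad, Set.mem_inter_iff, Set.mem_iInter, Set.mem_preimage,
          Set.mem_compl_iff, mem_setOf_eq]
      rw [this]
      exact hA.inter (MeasurableSet.iInter fun n => MeasurableSet.iInter fun _ =>
        (hTm.iterate n) hA.compl)
    obtain ⟨z, hz⟩ : ∃ z : Fin d → ℤ,
        (lam.prod volume) (Bad ∩ (Set.univ ×ˢ Metric.ball (fun i => (z i : ℝ)) 1)) ≠ 0 := by
      by_contra hall
      push_neg at hall
      apply h0
      have hcov : Bad = ⋃ z : Fin d → ℤ,
          Bad ∩ (Set.univ ×ˢ Metric.ball (fun i => (z i : ℝ)) 1) := by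
        ext q
        simp only [Set.mem_iUnion, Set.mem_inter_iff, Set.mem_prod, Set.mem_univ, true_and]
        constructor
        · intro hq
          refine ⟨fun i => round (q.2 i), hq, ?_⟩
          rw [Metric.mem_ball, dist_pi_lt_iff one_pos]
          intro i
          rw [Real.dist_eq]
          calc |q.2 i - ((round (q.2 i) : ℤ) : ℝ)| ≤ 1/2 := abs_sub_round _
            _ < 1 := by norm_num
        · rintro ⟨z, hq, _⟩; exact hq
      rw [hcov]
      exact measure_iUnion_null fun z => hall z
    set c : Fin d → ℝ := fun i => (z i : ℝ) with hc
    set W := Bad ∩ (Set.univ ×ˢ Metric.ball c 1) with hW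
    have hWm : MeasurableSet W := hBadm.inter (MeasurableSet.univ.prod measurableSet_ball)
    have hWB : W ⊆ Bad := Set.inter_subset_left
    have hWball : ∀ q ∈ W, q.2 ∈ Metric.ball c 1 := fun q hq => hq.2.2
    set s := (lam.prod volume) W with hs
    have hs0 : s ≠ 0 := hz
    have hstop : s ≠ ⊤ := by
      have hle : s ≤ (lam.prod volume) (Set.univ ×ˢ Metric.ball c 1) :=
        measure_mono Set.inter_subset_right
      rw [Measure.prod_prod] at hle
      exact ne_top_of_le_ne_top
        (ENNReal.mul_ne_top (measure_ne_top _ _) measure_ball_lt_top.ne) hle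
    have hdis : ∀ (q : Y × (Fin d → ℝ)) (n m : ℕ), n < m →
        (TT τ φ)^[n] q ∈ W → (TT τ φ)^[m] q ∈ W → False := by
      intro q n m hnm hn hm
      have hq : (TT τ φ)^[n] q ∈ Bad := hWB hn
      have h1 : (TT τ φ)^[m] q ∈ A := (hWB hm).1
      have h2 : (TT τ φ)^[m] q = (TT τ φ)^[m - n] ((TT τ φ)^[n] q) := by
        rw [← Function.iterate_add_apply]
        congr 1
        omega
      exact hq.2 (m - n) (by omega) (by rw [← h2]; exact h1)
    set F : Y → ℝ≥0∞ := fun y => volume (Prod.mk y ⁻¹' W) with hF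
    have hFm : Measurable F := measurable_measure_prodMk_left hWm
    have hFint : ∀ n : ℕ, ∫⁻ y, F (τ^[n] y) ∂lam = s := by
      intro n
      rw [(hτ.toMeasurePreserving.iterate n).lintegral_comp hFm]
      rw [hs, Measure.prod_apply hWm]
    set sR := s.toReal with hsR
    have hsRpos : 0 < sR := ENNReal.toReal_pos hs0 hstop
    set κR : ℝ := 3 ^ d with hκR
    have hκRpos : 0 < κR := by positivity
    set δ : ℝ := min (sR / (16 * κR * (d + 1))) (1/2) with hδ
    have hδpos : 0 < δ := lt_min (by positivity) (by norm_num)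
    have hδ2 : δ ≤ 1/2 := min_le_right _ _
    have hκ : (ENNReal.ofReal 3 : ℝ≥0∞) ^ d = ENNReal.ofReal κR := by
      rw [hκR, ENNReal.ofReal_pow (by norm_num)]
    -- no-return sets and probabilities
    set NR : ℕ → Set Y := fun K => {y | ∀ k, 1 ≤ k → k < K → δ ≤ ‖SS τ φ k y‖} with hNR
    have hNRm : ∀ K, MeasurableSet (NR K) := by
      intro K
      have : NR K = ⋂ k, ⋂ (_ : 1 ≤ k), ⋂ (_ : k < K), {y | δ ≤ ‖SS τ φ k y‖} := by
        ext y; simp [hNR]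
      rw [this]
      exact MeasurableSet.iInter fun k => MeasurableSet.iInter fun _ =>
        MeasurableSet.iInter fun _ =>
          measurableSet_le measurable_const (SS_measurable hτm hφ k).norm
    set p : ℕ → ℝ≥0∞ := fun K => lam (NR K) with hpdef
    have hNRanti : Antitone NR := by
      intro K K' hKK' y hy k hk1 hk2
      exact hy k hk1 (lt_of_lt_of_le hk2 hKK')
    have hpanti : Antitone p := fun K K' h => measure_mono (hNRanti h)
    have hiInter : lam (⋂ K, NR K) = 0 := by
      refine measure_eq_zero_iff_ae_notMem.2 ?_
      filter_upwards [hrec] with y hy hmem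
      have hinf := hy (Metric.ball 0 δ) (Metric.ball_mem_nhds _ hδpos)
      obtain ⟨k, hk1, hk0⟩ := (hinf.diff (Set.finite_singleton 0)).nonempty
      have hkne : k ≠ 0 := by simpa using hk0
      have := (Set.mem_iInter.1 hmem (k + 1)) k (by omega) (by omega)
      exact absurd (mem_ball_zero_iff.1 hk1) (not_lt.2 this)
    have hptend : Tendsto p atTop (nhds 0) := by
      have := tendsto_measure_iInter_atTop (μ := lam)
        (fun K => (hNRm K).nullMeasurableSet) hNRanti ⟨0, measure_ne_top _ _⟩
      rw [hiInter] at this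
      exact this
    have hηpos : (0 : ℝ≥0∞) < ENNReal.ofReal (sR / (4 * κR)) :=
      ENNReal.ofReal_pos.2 (by positivity)
    obtain ⟨K₀, hK₀⟩ := (hptend.eventually_lt_const hηpos).exists
    -- the grid measure
    set ν := Measure.pi fun _ : Fin d => (volume : Measure ℝ).restrict (Ico (0:ℝ) 1) with hν
    haveI hprob1 : IsProbabilityMeasure ((volume : Measure ℝ).restrict (Ico (0:ℝ) 1)) :=
      ⟨by rw [Measure.restrict_apply_univ, Real.volume_Ico]; norm_num⟩
    haveI hprobν : IsProbabilityMeasure ν := ⟨by rw [hν, Measure.pi_univ]; simp⟩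
    -- Step A : for every grid translation t
    have stepA : ∀ (N : ℕ) (t : Fin d → ℝ), (N : ℝ≥0∞) * s ≤ ENNReal.ofReal κR *
        ∑ n ∈ Finset.range N, lam {y | lastP τ φ t N n y} := by
      intro N t
      have hmeasP : ∀ n, MeasurableSet {y : Y | lastP τ φ t N n y} := by
        intro n
        have : {y : Y | lastP τ φ t N n y}
            = Prod.mk t ⁻¹' {q : (Fin d → ℝ) × Y | lastP τ φ q.1 N n q.2} := rfl
        rw [this]
        exact measurable_prodMk_left (measurableSet_lastP_prod hτm hφ N n)
      set G : Y → ℝ≥0∞ := fun y => ∑ n ∈ Finset.range N,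
        Set.indicator {y' | lastP τ φ t N n y'} (1 : Y → ℝ≥0∞) y with hG
      have hGm : Measurable G :=
        Finset.measurable_sum _ fun n _ => measurable_one.indicator (hmeasP n)
      have hcard : ∀ y, (((Finset.range N).filter (fun n => lastP τ φ t N n y)).card : ℝ≥0∞)
          = G y := by
        intro y
        rw [hG, Finset.card_filter]
        push_cast
        refine Finset.sum_congr rfl fun n _ => ?_
        rw [Set.indicator_apply]
        by_cases h : lastP τ φ t N n y <;> simp [h]
      have h1 : (N : ℝ≥0∞) * s = ∫⁻ y, ∑ n ∈ Finset.range N, F (τ^[n] y) ∂lam := by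
        rw [lintegral_finset_sum' _ (fun n _ =>
            (show AEMeasurable (fun y => F (τ^[n] y)) lam from
              (hFm.comp (hτm.iterate n)).aemeasurable)),
          Finset.sum_congr rfl fun n _ => hFint n, Finset.sum_const, Finset.card_range,
          nsmul_eq_mul]
      have h2 : ∀ y, ∑ n ∈ Finset.range N, F (τ^[n] y) ≤ G y * ENNReal.ofReal κR := by
        intro y
        rw [← hcard y]
        have := packing (τ := τ) (φ := φ) W hWm c hWball hdis t N y
        rwa [hκ] at this
      have h3 : ∫⁻ y, G y ∂lam = ∑ n ∈ Finset.range N, lam {y | lastP τ φ t N n y} := by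
        rw [hG, lintegral_finset_sum' _
          (fun n _ => (measurable_one.indicator (hmeasP n)).aemeasurable)]
        exact Finset.sum_congr rfl fun n _ => lintegral_indicator_one (hmeasP n)
      calc (N : ℝ≥0∞) * s = ∫⁻ y, ∑ n ∈ Finset.range N, F (τ^[n] y) ∂lam := h1
        _ ≤ ∫⁻ y, G y * ENNReal.ofReal κR ∂lam := lintegral_mono h2
        _ = (∫⁻ y, G y ∂lam) * ENNReal.ofReal κR := lintegral_mul_const _ hGm
        _ = ENNReal.ofReal κR * ∑ n ∈ Finset.range N, lam {y | lastP τ φ t N n y} := by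
            rw [h3, mul_comm]
    -- Step B : integrating the last-visit probabilities over the grid translation
    have stepB : ∀ (N n : ℕ), ∫⁻ t, lam {y | lastP τ φ t N n y} ∂ν ≤
        (d : ℝ≥0∞) * ENNReal.ofReal (4 * δ) + p (N - n) := by
      intro N n
      set BdP : Set ((Fin d → ℝ) × Y) :=
        {q | ∃ i : Fin d, ∃ m : ℤ, |SS τ φ n q.2 i - q.1 i - m| < δ} with hBdP
      have hBdPm : MeasurableSet BdP := measurableSet_Bd_prod hτm hφ n δ
      have hbound : ∀ t : Fin d → ℝ, lam {y | lastP τ φ t N n y} ≤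
          lam (Prod.mk t ⁻¹' BdP) + p (N - n) := by
        intro t
        have hincl : {y | lastP τ φ t N n y} ⊆
            (Prod.mk t ⁻¹' BdP) ∪ (τ^[n] ⁻¹' NR (N - n)) := by
          intro y hy
          by_cases hBd : ∃ i : Fin d, ∃ m : ℤ, |SS τ φ n y i - t i - m| < δ
          · exact Or.inl hBd
          · exact Or.inr fun k hk1 hk2 => dichotomy N n y hy hBd k hk1 hk2
        calc lam {y | lastP τ φ t N n y}
            ≤ lam ((Prod.mk t ⁻¹' BdP) ∪ (τ^[n] ⁻¹' NR (N - n))) := measure_mono hincl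
          _ ≤ lam (Prod.mk t ⁻¹' BdP) + lam (τ^[n] ⁻¹' NR (N - n)) := measure_union_le _ _
          _ = lam (Prod.mk t ⁻¹' BdP) + p (N - n) := by
              rw [(hτ.toMeasurePreserving.iterate n).measure_preimage
                (hNRm (N - n)).nullMeasurableSet]
      have hsec : Measurable fun t => lam (Prod.mk t ⁻¹' BdP) :=
        measurable_measure_prodMk_left hBdPm
      calc ∫⁻ t, lam {y | lastP τ φ t N n y} ∂ν
          ≤ ∫⁻ t, (lam (Prod.mk t ⁻¹' BdP) + p (N - n)) ∂ν := lintegral_mono hbound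
        _ = ∫⁻ t, lam (Prod.mk t ⁻¹' BdP) ∂ν + p (N - n) := by
            rw [lintegral_add_right _ measurable_const, lintegral_const, measure_univ, mul_one]
        _ ≤ (d : ℝ≥0∞) * ENNReal.ofReal (4 * δ) + p (N - n) := by
            refine add_le_add_left ?_ _
            have hpa : ∫⁻ t, lam (Prod.mk t ⁻¹' BdP) ∂ν = (ν.prod lam) BdP :=
              (Measure.prod_apply hBdPm).symm
            rw [hpa, Measure.prod_apply_symm hBdPm]
            have hinner : ∀ y : Y, ν ((fun t => (t, y)) ⁻¹' BdP)
                ≤ (d : ℝ≥0∞) * ENNReal.ofReal (4 * δ) := by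
              intro y
              have : ((fun t => (t, y)) ⁻¹' BdP)
                  = {t : Fin d → ℝ | ∃ i : Fin d, ∃ m : ℤ, |SS τ φ n y i - t i - m| < δ} := rfl
              rw [this, hν]
              exact nu_bd_le hδpos hδ2 (SS τ φ n y)
            calc ∫⁻ y, ν ((fun t => (t, y)) ⁻¹' BdP) ∂lam
                ≤ ∫⁻ _, (d : ℝ≥0∞) * ENNReal.ofReal (4 * δ) ∂lam := lintegral_mono hinner
              _ = (d : ℝ≥0∞) * ENNReal.ofReal (4 * δ) := by
                  rw [lintegral_const, measure_univ, mul_one]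
    -- assembling: the master inequality
    have key : ∀ N : ℕ, (N : ℝ≥0∞) * s ≤ ENNReal.ofReal κR *
        ((N : ℝ≥0∞) * ((d : ℝ≥0∞) * ENNReal.ofReal (4 * δ))
          + ∑ n ∈ Finset.range N, p (N - n)) := by
      intro N
      have hmeast : ∀ n, Measurable fun t : Fin d → ℝ => lam {y | lastP τ φ t N n y} := by
        intro n
        have : (fun t : Fin d → ℝ => lam {y | lastP τ φ t N n y})
            = fun t => lam (Prod.mk t ⁻¹' {q : (Fin d → ℝ) × Y | lastP τ φ q.1 N n q.2}) := rfl
        rw [this]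
        exact measurable_measure_prodMk_left (measurableSet_lastP_prod hτm hφ N n)
      calc (N : ℝ≥0∞) * s = ∫⁻ _, (N : ℝ≥0∞) * s ∂ν := by
            rw [lintegral_const, measure_univ, mul_one]
        _ ≤ ∫⁻ t, ENNReal.ofReal κR *
              ∑ n ∈ Finset.range N, lam {y | lastP τ φ t N n y} ∂ν :=
            lintegral_mono fun t => stepA N t
        _ = ENNReal.ofReal κR *
              ∫⁻ t, ∑ n ∈ Finset.range N, lam {y | lastP τ φ t N n y} ∂ν := by
            rw [lintegral_const_mul _ (Finset.measurable_sum _ fun n _ => hmeast n)]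
        _ = ENNReal.ofReal κR * ∑ n ∈ Finset.range N,
              ∫⁻ t, lam {y | lastP τ φ t N n y} ∂ν := by
            rw [lintegral_finset_sum' _ fun n _ => (hmeast n).aemeasurable]
        _ ≤ ENNReal.ofReal κR * ∑ n ∈ Finset.range N,
              ((d : ℝ≥0∞) * ENNReal.ofReal (4 * δ) + p (N - n)) := by
            exact mul_le_mul_right (Finset.sum_le_sum fun n _ => stepB N n) _
        _ = ENNReal.ofReal κR *
              ((N : ℝ≥0∞) * ((d : ℝ≥0∞) * ENNReal.ofReal (4 * δ))
                + ∑ n ∈ Finset.range N, p (N - n)) := by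
            rw [Finset.sum_add_distrib, Finset.sum_const, Finset.card_range, nsmul_eq_mul]
    -- tail sum bound
    have hsum : ∀ N : ℕ, ∑ n ∈ Finset.range N, p (N - n)
        ≤ (K₀ : ℝ≥0∞) + (N : ℝ≥0∞) * p K₀ := by
      intro N
      have hterm : ∀ n ∈ Finset.range N, p (N - n)
          ≤ p K₀ + (if K₀ ≤ N - n then 0 else 1) := by
        intro n _
        by_cases h : K₀ ≤ N - n
        · simpa [h] using hpanti h
        · simp only [h, if_false]
          calc p (N - n) ≤ 1 := prob_le_one
            _ ≤ p K₀ + 1 := le_add_self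
      calc ∑ n ∈ Finset.range N, p (N - n)
          ≤ ∑ n ∈ Finset.range N, (p K₀ + (if K₀ ≤ N - n then 0 else 1)) :=
            Finset.sum_le_sum hterm
        _ = (N : ℝ≥0∞) * p K₀ + ∑ n ∈ Finset.range N, (if K₀ ≤ N - n then 0 else (1:ℝ≥0∞)) := by
            rw [Finset.sum_add_distrib, Finset.sum_const, Finset.card_range, nsmul_eq_mul]
        _ ≤ (N : ℝ≥0∞) * p K₀ + (K₀ : ℝ≥0∞) := by
            refine add_le_add_right ?_ _
            have hcf : ∑ n ∈ Finset.range N, (if K₀ ≤ N - n then 0 else (1:ℝ≥0∞))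
                = (((Finset.range N).filter fun n => ¬ K₀ ≤ N - n).card : ℝ≥0∞) := by
              rw [Finset.card_filter]
              push_cast
              refine Finset.sum_congr rfl fun n _ => ?_
              by_cases h : K₀ ≤ N - n <;> simp [h]
            rw [hcf]
            have hsubset : ((Finset.range N).filter fun n => ¬ K₀ ≤ N - n)
                ⊆ Finset.Ico (N - K₀) N := by
              intro n hn
              simp only [Finset.mem_filter, Finset.mem_range, not_le] at hn
              simp only [Finset.mem_Ico]
              omega
            have hcard := Finset.card_le_card hsubset
            rw [Nat.card_Ico] at hcard
            exact_mod_cast le_trans (Nat.cast_le.2 hcard) (by exact_mod_cast Nat.cast_le.2 (by omega : N - (N - K₀) ≤ K₀))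
        _ = (K₀ : ℝ≥0∞) + (N : ℝ≥0∞) * p K₀ := add_comm _ _
    -- numeric bounds
    set q : ℝ≥0∞ := ENNReal.ofReal (sR / 4) with hq
    have hbd1 : ENNReal.ofReal κR * ((d : ℝ≥0∞) * ENNReal.ofReal (4 * δ)) ≤ q := by
      have hdr : (d : ℝ≥0∞) = ENNReal.ofReal (d : ℝ) := by
        rw [ENNReal.ofReal_natCast]
      rw [hdr, ← ENNReal.ofReal_mul (by positivity), ← ENNReal.ofReal_mul (by positivity), hq]
      apply ENNReal.ofReal_le_ofReal
      have h1 : δ ≤ sR / (16 * κR * (d + 1)) := min_le_left _ _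
      have h2 : κR * ((d : ℝ) * (4 * δ)) ≤ κR * ((d : ℝ) * (4 * (sR / (16 * κR * (d + 1))))) := by
        gcongr
      refine le_trans h2 ?_
      have h3 : κR * ((d : ℝ) * (4 * (sR / (16 * κR * (d + 1)))))
          = (d : ℝ) * sR / (4 * ((d : ℝ) + 1)) := by
        field_simp
        ring
      rw [h3]
      rw [div_le_div_iff₀ (by positivity) (by norm_num)]
      nlinarith [hsRpos, Nat.cast_nonneg (α := ℝ) d]
    have hbd2 : ENNReal.ofReal κR * p K₀ ≤ q := by
      calc ENNReal.ofReal κR * p K₀ ≤ ENNReal.ofReal κR * ENNReal.ofReal (sR / (4 * κR)) :=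
            mul_le_mul_right hK₀.le _
        _ = ENNReal.ofReal (κR * (sR / (4 * κR))) := by
            rw [ENNReal.ofReal_mul (le_of_lt hκRpos)]
        _ = q := by
            rw [hq]
            congr 1
            field_simp
    -- final contradiction
    set r : ℝ≥0∞ := ENNReal.ofReal (sR / 2) with hr
    set C : ℝ≥0∞ := ENNReal.ofReal κR * (K₀ : ℝ≥0∞) with hC
    have hfinal : ∀ N : ℕ, (N : ℝ≥0∞) * r ≤ C := by
      intro N
      have h1 : (N : ℝ≥0∞) * s ≤ (N : ℝ≥0∞) * q + (C + (N : ℝ≥0∞) * q) := by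
        calc (N : ℝ≥0∞) * s ≤ ENNReal.ofReal κR *
            ((N : ℝ≥0∞) * ((d : ℝ≥0∞) * ENNReal.ofReal (4 * δ))
              + ∑ n ∈ Finset.range N, p (N - n)) := key N
          _ ≤ ENNReal.ofReal κR *
              ((N : ℝ≥0∞) * ((d : ℝ≥0∞) * ENNReal.ofReal (4 * δ))
                + ((K₀ : ℝ≥0∞) + (N : ℝ≥0∞) * p K₀)) :=
              mul_le_mul_right (add_le_add_right (hsum N) _) _
          _ = ENNReal.ofReal κR * ((N : ℝ≥0∞) * ((d : ℝ≥0∞) * ENNReal.ofReal (4 * δ)))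
              + (ENNReal.ofReal κR * (K₀ : ℝ≥0∞)
                + ENNReal.ofReal κR * ((N : ℝ≥0∞) * p K₀)) := by
              rw [mul_add, mul_add]
          _ ≤ (N : ℝ≥0∞) * q + (C + (N : ℝ≥0∞) * q) := by
              refine add_le_add ?_ (add_le_add ?_ ?_)
              · have hcomm : ENNReal.ofReal κR * ((N : ℝ≥0∞) * ((d : ℝ≥0∞) * ENNReal.ofReal (4 * δ)))
                    = (N : ℝ≥0∞) * (ENNReal.ofReal κR * ((d : ℝ≥0∞) * ENNReal.ofReal (4 * δ))) := by
                  ring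
                rw [hcomm]
                exact mul_le_mul_right hbd1 _
              · rw [hC]
              · have hcomm : ENNReal.ofReal κR * ((N : ℝ≥0∞) * p K₀)
                    = (N : ℝ≥0∞) * (ENNReal.ofReal κR * p K₀) := by ring
                rw [hcomm]
                exact mul_le_mul_right hbd2 _
      have hsplit : (N : ℝ≥0∞) * s = (N : ℝ≥0∞) * q + ((N : ℝ≥0∞) * q + (N : ℝ≥0∞) * r) := by
        rw [← mul_add, ← mul_add]
        congr 1
        rw [hq, hr, ← ENNReal.ofReal_add (by positivity) (by positivity),
          ← ENNReal.ofReal_add (by positivity) (by positivity)]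
        have hrsum : sR / 4 + (sR / 4 + sR / 2) = sR := by ring
        rw [hrsum, hsR, ENNReal.ofReal_toReal hstop]
      rw [hsplit] at h1
      have hNq : (N : ℝ≥0∞) * q ≠ ⊤ := ENNReal.mul_ne_top (ENNReal.natCast_ne_top N)
        ENNReal.ofReal_ne_top
      have h2 : (N : ℝ≥0∞) * q + (N : ℝ≥0∞) * r ≤ C + (N : ℝ≥0∞) * q :=
        (ENNReal.add_le_add_iff_left hNq).1 h1
      have h3 : (N : ℝ≥0∞) * q + (N : ℝ≥0∞) * r ≤ (N : ℝ≥0∞) * q + C := by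
        rwa [add_comm C] at h2
      exact (ENNReal.add_le_add_iff_left hNq).1 h3
    have hrne : r ≠ 0 := (ENNReal.ofReal_pos.2 (by positivity)).ne'
    have hrtop : r ≠ ⊤ := ENNReal.ofReal_ne_top
    have hCtop : C / r ≠ ⊤ :=
      (ENNReal.div_lt_top (ENNReal.mul_ne_top ENNReal.ofReal_ne_top
        (ENNReal.natCast_ne_top K₀)) hrne).ne
    obtain ⟨N, hN⟩ := ENNReal.exists_nat_gt hCtop
    have : C < (N : ℝ≥0∞) * r := (ENNReal.div_lt_iff (Or.inl hrne) (Or.inl hrtop)).1 hN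
    exact absurd (hfinal N) (not_le.2 this)
  · -- easy direction: conservativity implies recurrence
    intro hcons
    have hconsStruct : Conservative (TT τ φ) (lam.prod volume) := by
      refine ⟨hTp.quasiMeasurePreserving, fun s hs h0 => ?_⟩
      by_contra hno
      push_neg at hno
      have : s ⊆ {p ∈ s | ∀ n : ℕ, 1 ≤ n → (TT τ φ)^[n] p ∉ s} := by
        intro x hx
        refine ⟨hx, fun n hn hmem => ?_⟩
        exact (hno x hx n (by omega)) hmem
      have hz := hcons s hs (pos_iff_ne_zero.mpr h0)
      exact h0 (le_antisymm (le_trans (measure_mono this) hz.le) (zero_le))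
    -- main part of easy direction
    have key : ∀ ε : ℝ, 0 < ε → ∀ᵐ y ∂lam, {n : ℕ | SS τ φ n y ∈ Metric.ball (0 : Fin d → ℝ) ε}.Infinite := by
      intro ε hε
      set C : ℕ → Set Y := fun N => {y | ∀ n, N ≤ n → ¬ (‖SS τ φ n y‖ < ε)} with hC
      have hCm : ∀ N, MeasurableSet (C N) := by
        intro N
        have : C N = ⋂ (n : ℕ), ⋂ (_ : N ≤ n), {y | ε ≤ ‖SS τ φ n y‖} := by
          ext y; simp [hC, not_lt]
        rw [this]
        exact MeasurableSet.iInter fun n => MeasurableSet.iInter fun _ =>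
          measurableSet_le measurable_const (SS_measurable hτm hφ n).norm
      have hCnull : ∀ N, lam (C N) = 0 := by
        intro N
        by_contra hCN
        set A : Set (Y × (Fin d → ℝ)) := (C N) ×ˢ Metric.ball (0 : Fin d → ℝ) (ε/2) with hAdef
        have hAm : MeasurableSet A := (hCm N).prod measurableSet_ball
        have hApos : 0 < (lam.prod volume) A := by
          rw [hAdef, Measure.prod_prod]
          exact ENNReal.mul_pos hCN (Metric.measure_ball_pos _ _ (by linarith)).ne'
        have hfreq := hconsStruct.ae_mem_imp_frequently_image_mem hAm.nullMeasurableSet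
        have : ∀ᵐ p ∂(lam.prod volume), p ∉ A := by
          filter_upwards [hfreq] with p hp hpA
          obtain ⟨n, hnN, hnA⟩ := (frequently_atTop.1 (hp hpA)) N
          rw [skew_iter] at hnA
          have h1 : p.1 ∈ C N := hpA.1
          have h2 : ‖p.2‖ < ε/2 := mem_ball_zero_iff.1 hpA.2
          have h3 : ‖p.2 + SS τ φ n p.1‖ < ε/2 := mem_ball_zero_iff.1 hnA.2
          have : ‖SS τ φ n p.1‖ < ε := by
            calc ‖SS τ φ n p.1‖ = ‖(p.2 + SS τ φ n p.1) - p.2‖ := by rw [add_sub_cancel_left]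
            _ ≤ ‖p.2 + SS τ φ n p.1‖ + ‖p.2‖ := norm_sub_le _ _
            _ < ε := by linarith
          exact (h1 n hnN) this
        have : (lam.prod volume) A = 0 := by
          rw [← measure_eq_zero_iff_ae_notMem] at this; exact this
        exact absurd this hApos.ne'
      have : lam (⋃ N, C N) = 0 := measure_iUnion_null hCnull
      filter_upwards [measure_eq_zero_iff_ae_notMem.1 this] with y hy
      by_contra hfin
      rw [Set.not_infinite] at hfin
      obtain ⟨N, hN⟩ := hfin.bddAbove
      refine hy (Set.mem_iUnion.2 ⟨N + 1, fun n hn hlt => ?_⟩)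
      have : n ∈ {n : ℕ | SS τ φ n y ∈ Metric.ball (0 : Fin d → ℝ) ε} :=
        mem_ball_zero_iff.2 hlt
      have := hN this
      omega
    have hall : ∀ᵐ y ∂lam, ∀ m : ℕ,
        {n : ℕ | SS τ φ n y ∈ Metric.ball (0 : Fin d → ℝ) (1/(m+1))}.Infinite := by
      rw [ae_all_iff]
      intro m
      exact key _ (by positivity)
    filter_upwards [hall] with y hy U hU
    obtain ⟨ε, hε, hball⟩ := Metric.mem_nhds_iff.1 hU
    obtain ⟨m, hm⟩ := exists_nat_one_div_lt hε
    refine (hy m).mono fun n hn => ?_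
    exact hball (mem_ball_zero_iff.2 (lt_trans (mem_ball_zero_iff.1 hn) (by exact_mod_cast hm)))
end

section
/- Let θ : G → ℂ be defined by θ(g) = ∫ f(gx) conj(f(x)) dx for a function f with |f| = 1 a.e. on a space with G-invariant probability measure. If g satisfies |θ(g)| = 1, then f(gx) = θ(g) f(x) a.e., and consequently θ(gh) = θ(hg) = θ(g)θ(h) for all h ∈ G. -/
open MeasureTheory

private lemma normsub (a b : ℂ) :
    ‖a - b‖^2 = ‖a‖^2 + ‖b‖^2 - 2*(a * (starRingEnd ℂ) b).re := by
  have := Complex.normSq_sub a b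
  simp only [← Complex.normSq_eq_norm_sq] at *
  push_cast [this]; ring

/-- Let `θ(g) = ∫ f(g•x) conj(f(x)) dm` where `|f| = 1` a.e. on a
probability space with measure-preserving `G`-action. If `|θ(g)| = 1`, then
`f(g•x) = θ(g) f(x)` a.e., and consequently `θ(gh) = θ(hg) = θ(g)θ(h)` for all `h`. -/
theorem stmt16 {X : Type*} [MeasurableSpace X] (m : Measure X) [IsProbabilityMeasure m]
    {G : Type*} [Group G] [MulAction G X]
    (hmp : ∀ g : G, MeasurePreserving (fun x : X => g • x) m m)
    (f : X → ℂ) (hf : AEStronglyMeasurable f m)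
    (hf1 : ∀ᵐ x ∂m, ‖f x‖ = 1)
    (θ : G → ℂ) (hθ : ∀ g : G, θ g = ∫ x, f (g • x) * (starRingEnd ℂ) (f x) ∂m)
    (g : G) (hg : ‖θ g‖ = 1) :
    (∀ᵐ x ∂m, f (g • x) = θ g * f x) ∧
    (∀ h : G, θ (g * h) = θ g * θ h ∧ θ (h * g) = θ g * θ h) := by
  set c := θ g with hc
  have hmeas : ∀ k : G, AEStronglyMeasurable (fun x => f (k • x)) m := fun k =>
    hf.comp_measurePreserving (hmp k)
  have hconj : AEStronglyMeasurable (fun x => (starRingEnd ℂ) (f x)) m :=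
    Complex.continuous_conj.comp_aestronglyMeasurable hf
  have habs : ∀ k : G, ∀ᵐ x ∂m, ‖f (k • x)‖ = 1 := fun k =>
    (hmp k).quasiMeasurePreserving.ae hf1
  have hint : ∀ k : G, Integrable (fun x => f (k • x) * (starRingEnd ℂ) (f x)) m := by
    intro k
    refine Integrable.mono' (integrable_const 1) ((hmeas k).mul hconj) ?_
    filter_upwards [habs k, hf1] with x h1 h2
    simp [map_mul, h1, h2]
  have hcc : c * (starRingEnd ℂ) c = 1 := by
    rw [Complex.mul_conj]
    norm_cast
    rw [Complex.normSq_eq_norm_sq, hg, one_pow]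
  -- Part 1
  have key : ∀ᵐ x ∂m, f (g • x) = c * f x := by
    have iA : Integrable (fun x => ‖f (g • x)‖^2) m := by
      refine (integrable_const (1:ℝ)).congr ?_
      filter_upwards [habs g] with x hx
      rw [hx, one_pow]
    have iB : Integrable (fun x => ‖c * f x‖^2) m := by
      refine (integrable_const (1:ℝ)).congr ?_
      filter_upwards [hf1] with x hx
      rw [norm_mul, hx, hg, one_mul, one_pow]
    have iC : Integrable (fun x => 2*((f (g • x) * (starRingEnd ℂ) (c * f x)).re)) m := by
      have : Integrable (fun x => f (g • x) * (starRingEnd ℂ) (c * f x)) m := by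
        refine ((hint g).const_mul ((starRingEnd ℂ) c)).congr ?_
        filter_upwards with x
        rw [map_mul]; ring
      exact this.re.const_mul 2
    have eA : ∫ x, ‖f (g • x)‖^2 ∂m = 1 := by
      rw [integral_congr_ae (g := fun _ => (1:ℝ)) ?_, integral_const]
      · simp
      · filter_upwards [habs g] with x hx
        rw [hx, one_pow]
    have eB : ∫ x, ‖c * f x‖^2 ∂m = 1 := by
      rw [integral_congr_ae (g := fun _ => (1:ℝ)) ?_, integral_const]
      · simp
      · filter_upwards [hf1] with x hx
        rw [norm_mul, hx, hg, one_mul, one_pow]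
    have hI : Integrable (fun x => f (g • x) * (starRingEnd ℂ) (c * f x)) m := by
      refine ((hint g).const_mul ((starRingEnd ℂ) c)).congr ?_
      filter_upwards with x
      rw [map_mul]; ring
    have eC : ∫ x, 2*((f (g • x) * (starRingEnd ℂ) (c * f x)).re) ∂m = 2 := by
      rw [integral_const_mul]
      have h1 : ∫ x, (f (g • x) * (starRingEnd ℂ) (c * f x)).re ∂m
          = (∫ x, f (g • x) * (starRingEnd ℂ) (c * f x) ∂m).re := by
        have := Complex.reCLM.integral_comp_comm hI
        simpa using this
      rw [h1]
      have h2 : ∫ x, f (g • x) * (starRingEnd ℂ) (c * f x) ∂m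
          = (starRingEnd ℂ) c * ∫ x, f (g • x) * (starRingEnd ℂ) (f x) ∂m := by
        rw [← integral_const_mul]
        refine integral_congr_ae ?_
        filter_upwards with x
        rw [map_mul]; ring
      rw [h2, ← hθ g, ← hc]
      have : (starRingEnd ℂ) c * c = 1 := by rw [mul_comm]; exact hcc
      rw [this]; norm_num
    have hAB : Integrable (fun x => ‖f (g • x)‖^2 + ‖c * f x‖^2) m := iA.add iB
    have hzero : ∫ x, ‖f (g • x) - c * f x‖^2 ∂m = 0 := by
      simp_rw [normsub]
      rw [integral_sub hAB iC, integral_add iA iB, eA, eB, eC]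
      norm_num
    have hInt : Integrable (fun x => ‖f (g • x) - c * f x‖^2) m := by
      refine (hAB.sub iC).congr ?_
      filter_upwards with x
      simp only [Pi.sub_apply, normsub]
    have := (integral_eq_zero_iff_of_nonneg (fun x => sq_nonneg _) hInt).mp hzero
    filter_upwards [this] with x hx
    have hx' : ‖f (g • x) - c * f x‖ = 0 := by
      have := pow_eq_zero_iff (n := 2) (by norm_num) |>.mp hx
      exact this
    rw [norm_eq_zero, sub_eq_zero] at hx'
    exact hx'
  refine ⟨key, fun h => ?_⟩
  constructor
  · rw [hθ (g * h), hθ h]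
    have : ∀ᵐ x ∂m, f ((g * h) • x) * (starRingEnd ℂ) (f x)
        = c * (f (h • x) * (starRingEnd ℂ) (f x)) := by
      filter_upwards [(hmp h).quasiMeasurePreserving.ae key] with x hx
      rw [mul_smul, hx]; ring
    rw [integral_congr_ae this, integral_const_mul]
  · rw [hθ (h * g), hθ h]
    have step1 : ∀ᵐ x ∂m, f ((h * g) • x) * (starRingEnd ℂ) (f x)
        = c * (f (h • (g • x)) * (starRingEnd ℂ) (f (g • x))) := by
      filter_upwards [key] with x hx
      rw [mul_smul, hx, map_mul]
      linear_combination (-(f (h • g • x) * (starRingEnd ℂ) (f x))) * hcc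
    rw [integral_congr_ae step1, integral_const_mul]
    congr 1
    have hφ : AEStronglyMeasurable (fun y => f (h • y) * (starRingEnd ℂ) (f y))
        (m.map (fun x => g • x)) := by
      rw [(hmp g).map_eq]; exact (hmeas h).mul hconj
    rw [← integral_map (hmp g).measurable.aemeasurable hφ, (hmp g).map_eq]
end
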